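/- Let X and Y be two random variables over the same finite domain 𝒵. If Pr_{z ∼ X}[ Pr[X = z] / Pr[Y = z] ≥ 2^k ] ≤ β, then the β-approximate max-divergence satisfies D_∞^β(X ‖ Y) ≤ k. -/

import Mathlib

open scoped ENNReal

/-- Probability of an event under a PMF. -/
noncomputable def pr {Z : Type*} (p : PMF Z) (O : Set Z) : ℝ≥0∞ :=
  p.toOuterMeasure O

/-- `D_∞^δ(p ‖ q) ≤ k` (δ-approximate max-divergence, log base 2):
for every event `O` with `p(O) > δ`, `(p(O) - δ) / q(O) ≤ 2 ^ k`. -/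
def approxDivLe {Z : Type*} (p q : PMF Z) (δ k : ℝ) : Prop :=
  ∀ O : Set Z, ENNReal.ofReal δ < pr p O →
    pr p O - ENNReal.ofReal δ ≤ (2 : ℝ≥0∞) ^ k * pr q O

/-- If `Pr_{z ∼ X}[ Pr[X = z] / Pr[Y = z] ≥ 2^k ] ≤ β`, then the
β-approximate max-divergence satisfies `D_∞^β(X ‖ Y) ≤ k`. -/
theorem approxDiv_le_of_pointwise_ratio
    {Z : Type*} [Fintype Z] (p q : PMF Z) (k β : ℝ)
    (h : pr p {z : Z | (2 : ℝ≥0∞) ^ k ≤ p z / q z} ≤ ENNReal.ofReal β) :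
    approxDivLe p q β k := by
  intro O hO
  set B : Set Z := {z : Z | (2 : ℝ≥0∞) ^ k ≤ p z / q z} with hB
  have hpt : ∀ z ∉ B, p z ≤ (2:ℝ≥0∞)^k * q z := by
    intro z hz
    simp only [hB, Set.mem_setOf_eq, not_le] at hz
    rcases eq_or_ne (q z) 0 with hq | hq
    · rcases eq_or_ne (p z) 0 with hp | hp
      · simp [hp]
      · exfalso
        rw [hq, ENNReal.div_zero hp] at hz
        exact (not_lt.mpr le_top) hz
    · calc p z = p z / q z * q z :=
            (ENNReal.div_mul_cancel hq (PMF.apply_ne_top q z)).symm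
      _ ≤ (2:ℝ≥0∞)^k * q z := mul_le_mul_left hz.le _
  have hsplit : pr p O ≤ pr p (O \ B) + pr p (O ∩ B) := by
    have hsub : O ⊆ (O \ B) ∪ (O ∩ B) := by
      intro z hz; by_cases hzB : z ∈ B
      · exact Or.inr ⟨hz, hzB⟩
      · exact Or.inl ⟨hz, hzB⟩
    calc pr p O ≤ pr p ((O \ B) ∪ (O ∩ B)) := p.toOuterMeasure.mono hsub
      _ ≤ _ := MeasureTheory.measure_union_le _ _
  have h1 : pr p (O ∩ B) ≤ ENNReal.ofReal β :=
    le_trans (p.toOuterMeasure.mono Set.inter_subset_right) h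
  have h2 : pr p (O \ B) ≤ (2:ℝ≥0∞)^k * pr q O := by
    have hq : pr q O = ∑' z, O.indicator q z := PMF.toOuterMeasure_apply q O
    rw [pr, PMF.toOuterMeasure_apply, hq, ← ENNReal.tsum_mul_left]
    apply ENNReal.tsum_le_tsum
    intro z
    by_cases hz : z ∈ O \ B
    · rw [Set.indicator_of_mem hz, Set.indicator_of_mem hz.1]
      exact hpt z hz.2
    · rw [Set.indicator_of_notMem hz]
      exact zero_le
  rw [tsub_le_iff_right]
  calc pr p O ≤ pr p (O \ B) + pr p (O ∩ B) := hsplit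
    _ ≤ (2:ℝ≥0∞)^k * pr q O + ENNReal.ofReal β := add_le_add h2 h1
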